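/- Let (Z_n)_{n≥0} be a submartingale taking values in [0, K] that converges almost surely and in L² to a limit Z_∞. Then E[Σ_{n≥0} (Z_{n+1} - Z_n)²] ≤ E[Z_∞²] - E[Z_0²] ≤ K². -/

import Mathlib

open MeasureTheory ProbabilityTheory Filter
open scoped ENNReal

/-- For a `[0,K]`-valued submartingale converging a.s. and in `L²` to `Zlim`, the expected
sum of squared increments is bounded by `E[Zlim²] - E[Z 0²] ≤ K²`. -/
theorem stmt_11 {Ω : Type*} {m : MeasurableSpace Ω} (μ : Measure Ω) [IsProbabilityMeasure μ]
    (ℱ : Filtration ℕ m) (Z : ℕ → Ω → ℝ) (K : ℝ)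
    (hZ : Submartingale Z ℱ μ)
    (hZ0 : ∀ n, ∀ᵐ ω ∂μ, 0 ≤ Z n ω)
    (hZK : ∀ n, ∀ᵐ ω ∂μ, Z n ω ≤ K)
    (Zlim : Ω → ℝ) (hZlimMeas : Measurable Zlim)
    (has : ∀ᵐ ω ∂μ, Tendsto (fun n => Z n ω) atTop (nhds (Zlim ω)))
    (hL2 : Tendsto (fun n => ∫ ω, (Z n ω - Zlim ω) ^ 2 ∂μ) atTop (nhds 0)) :
    (∫⁻ ω, ∑' n : ℕ, ENNReal.ofReal ((Z (n + 1) ω - Z n ω) ^ 2) ∂μ)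
        ≤ ENNReal.ofReal ((∫ ω, Zlim ω ^ 2 ∂μ) - ∫ ω, Z 0 ω ^ 2 ∂μ) ∧
      (∫ ω, Zlim ω ^ 2 ∂μ) - (∫ ω, Z 0 ω ^ 2 ∂μ) ≤ K ^ 2 := by
  -- basic measurability and integrability facts
  have hZmeas : ∀ n, StronglyMeasurable (Z n) :=
    fun n => (hZ.stronglyAdapted n).mono (ℱ.le n)
  have hZint : ∀ n, Integrable (Z n) μ := fun n => hZ.integrable n
  -- a.e. bounds
  have hbd : ∀ n, ∀ᵐ ω ∂μ, 0 ≤ Z n ω ∧ Z n ω ≤ K := fun n => (hZ0 n).and (hZK n)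
  have hZsqint : ∀ n, Integrable (fun ω => Z n ω ^ 2) μ := by
    intro n
    refine Integrable.mono' (integrable_const (K ^ 2))
      ((hZmeas n).pow 2).aestronglyMeasurable ?_
    filter_upwards [hbd n] with ω ⟨h0, hK⟩
    rw [Real.norm_eq_abs, abs_of_nonneg (sq_nonneg _)]
    exact pow_le_pow_left₀ h0 hK 2
  -- cross term is nonnegative
  have hcross : ∀ n, 0 ≤ ∫ ω, Z n ω * (Z (n + 1) ω - Z n ω) ∂μ := by
    intro n
    set g : Ω → ℝ := fun ω => Z (n + 1) ω - Z n ω with hg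
    have hgint : Integrable g μ := (hZint (n + 1)).sub (hZint n)
    have hfgint : Integrable (fun ω => Z n ω * g ω) μ := by
      refine Integrable.mono' (integrable_const (K * (K + K)))
        ((hZmeas n).mul (((hZmeas (n+1)).sub (hZmeas n)))).aestronglyMeasurable ?_
      filter_upwards [hbd n, hbd (n+1)] with ω ⟨h0, hK⟩ ⟨h0', hK'⟩
      rw [Real.norm_eq_abs, hg, abs_mul, abs_of_nonneg h0]
      refine mul_le_mul hK ?_ (abs_nonneg _) (h0.trans hK)
      rw [abs_sub_le_iff]
      constructor <;> nlinarith
    -- conditional expectation of g is nonneg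
    have hcond : (0 : Ω → ℝ) ≤ᵐ[μ] μ[g | ℱ n] := by
      have h1 : Z n ≤ᵐ[μ] μ[Z (n + 1) | ℱ n] := hZ.2.1 n (n + 1) (Nat.le_succ n)
      have h2 : μ[g | ℱ n] =ᵐ[μ] μ[Z (n + 1) | ℱ n] - μ[Z n | ℱ n] :=
        condExp_sub (hZint (n + 1)) (hZint n) _
      have h3 : μ[Z n | ℱ n] = Z n :=
        condExp_of_stronglyMeasurable (ℱ.le n) (hZ.stronglyAdapted n) (hZint n)
      filter_upwards [h1, h2] with ω h1 h2
      have h3' := congrFun h3 ω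
      simp only [Pi.zero_apply, h2, Pi.sub_apply, h3']
      linarith
    have hpull : μ[Z n * g | ℱ n] =ᵐ[μ] Z n * μ[g | ℱ n] :=
      condExp_mul_of_stronglyMeasurable_left (hZ.stronglyAdapted n) hfgint hgint
    have hfgint2 : Integrable (Z n * g) μ := hfgint
    calc (0:ℝ) ≤ ∫ ω, Z n ω * (μ[g | ℱ n]) ω ∂μ := by
          refine integral_nonneg_of_ae ?_
          filter_upwards [hZ0 n, hcond] with ω h0 hc
          exact mul_nonneg h0 hc
      _ = ∫ ω, (μ[Z n * g | ℱ n]) ω ∂μ := by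
          refine integral_congr_ae ?_
          filter_upwards [hpull] with ω h; exact h.symm
      _ = ∫ ω, (Z n * g) ω ∂μ := integral_condExp (ℱ.le n)
      _ = ∫ ω, Z n ω * (Z (n + 1) ω - Z n ω) ∂μ := rfl
  -- main one-step inequality
  have hstep : ∀ n, ∫ ω, (Z (n + 1) ω - Z n ω) ^ 2 ∂μ ≤
      (∫ ω, Z (n + 1) ω ^ 2 ∂μ) - ∫ ω, Z n ω ^ 2 ∂μ := by
    intro n
    have hdint : Integrable (fun ω => Z n ω * (Z (n + 1) ω - Z n ω)) μ := by
      have := ((hZsqint (n+1)).sub (hZsqint n)).sub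
        ((hZsqint (n+1)).sub (hZsqint n))
      -- derive via boundedness instead
      refine Integrable.mono' (integrable_const (K * (K + K)))
        ((hZmeas n).mul ((hZmeas (n+1)).sub (hZmeas n))).aestronglyMeasurable ?_
      filter_upwards [hbd n, hbd (n+1)] with ω ⟨h0, hK⟩ ⟨h0', hK'⟩
      rw [Real.norm_eq_abs, abs_mul, abs_of_nonneg h0]
      refine mul_le_mul hK ?_ (abs_nonneg _) (h0.trans hK)
      rw [abs_sub_le_iff]
      constructor <;> nlinarith
    have hexp : ∀ ω, (Z (n + 1) ω - Z n ω) ^ 2 =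
        Z (n + 1) ω ^ 2 - Z n ω ^ 2 - 2 * (Z n ω * (Z (n + 1) ω - Z n ω)) := by
      intro ω; ring
    have : ∫ ω, (Z (n + 1) ω - Z n ω) ^ 2 ∂μ =
        (∫ ω, Z (n + 1) ω ^ 2 ∂μ) - (∫ ω, Z n ω ^ 2 ∂μ)
          - 2 * ∫ ω, Z n ω * (Z (n + 1) ω - Z n ω) ∂μ := by
      have hI1 : Integrable (fun ω => Z (n + 1) ω ^ 2 - Z n ω ^ 2) μ :=
        (hZsqint (n+1)).sub (hZsqint n)
      have hI2 : Integrable (fun ω => 2 * (Z n ω * (Z (n + 1) ω - Z n ω))) μ :=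
        hdint.const_mul 2
      simp_rw [hexp]
      rw [integral_sub hI1 hI2, integral_sub (hZsqint (n+1)) (hZsqint n),
        integral_const_mul]
    rw [this]
    have := hcross n
    linarith
  -- monotone, converging sequence of second moments
  set A : ℕ → ℝ := fun n => ∫ ω, Z n ω ^ 2 ∂μ with hA
  have hmono : Monotone A := by
    refine monotone_nat_of_le_succ fun n => ?_
    have h1 := hstep n
    have h2 : 0 ≤ ∫ ω, (Z (n + 1) ω - Z n ω) ^ 2 ∂μ :=
      integral_nonneg fun ω => sq_nonneg _
    show (∫ ω, Z n ω ^ 2 ∂μ) ≤ ∫ ω, Z (n + 1) ω ^ 2 ∂μ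
    linarith
  -- Zlim bounds
  have hlimbd : ∀ᵐ ω ∂μ, 0 ≤ Zlim ω ∧ Zlim ω ≤ K := by
    have hall : ∀ᵐ ω ∂μ, ∀ n, 0 ≤ Z n ω ∧ Z n ω ≤ K := ae_all_iff.2 hbd
    filter_upwards [hall, has] with ω hb ht
    exact ⟨ge_of_tendsto' ht fun n => (hb n).1, le_of_tendsto' ht fun n => (hb n).2⟩
  -- A tends to ∫ Zlim ^ 2 by dominated convergence
  have hAlim : Tendsto A atTop (nhds (∫ ω, Zlim ω ^ 2 ∂μ)) := by
    refine tendsto_integral_of_dominated_convergence (fun _ => K ^ 2)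
      (fun n => ((hZmeas n).pow 2).aestronglyMeasurable) (integrable_const _) ?_ ?_
    · intro n
      filter_upwards [hbd n] with ω ⟨h0, hK⟩
      rw [Real.norm_eq_abs, abs_of_nonneg (sq_nonneg _)]
      exact pow_le_pow_left₀ h0 hK 2
    · filter_upwards [has] with ω ht
      exact (ht.pow 2)
  have hAle : ∀ n, A n ≤ ∫ ω, Zlim ω ^ 2 ∂μ := fun n => hmono.ge_of_tendsto hAlim n
  -- telescoping bound for partial sums
  have hpartial : ∀ N, ∑ n ∈ Finset.range N, (∫ ω, (Z (n + 1) ω - Z n ω) ^ 2 ∂μ) ≤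
      (∫ ω, Zlim ω ^ 2 ∂μ) - A 0 := by
    intro N
    calc ∑ n ∈ Finset.range N, (∫ ω, (Z (n + 1) ω - Z n ω) ^ 2 ∂μ)
        ≤ ∑ n ∈ Finset.range N, (A (n + 1) - A n) :=
          Finset.sum_le_sum fun n _ => hstep n
      _ = A N - A 0 := Finset.sum_range_sub A N
      _ ≤ (∫ ω, Zlim ω ^ 2 ∂μ) - A 0 := by linarith [hAle N]
  have hdintsq : ∀ n, Integrable (fun ω => (Z (n + 1) ω - Z n ω) ^ 2) μ := by
    intro n
    refine Integrable.mono' (integrable_const ((K + K) ^ 2))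
      ((((hZmeas (n+1)).sub (hZmeas n)).pow 2)).aestronglyMeasurable ?_
    filter_upwards [hbd n, hbd (n+1)] with ω ⟨h0, hK⟩ ⟨h0', hK'⟩
    rw [Real.norm_eq_abs, abs_of_nonneg (sq_nonneg _)]
    nlinarith
  constructor
  · -- main inequality
    have hmeasE : ∀ n : ℕ, AEMeasurable
        (fun ω => ENNReal.ofReal ((Z (n + 1) ω - Z n ω) ^ 2)) μ := fun n =>
      (ENNReal.measurable_ofReal.comp
        (((hZmeas (n+1)).measurable.sub (hZmeas n).measurable).pow_const 2)).aemeasurable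
    rw [lintegral_tsum hmeasE]
    refine Summable.tsum_le_of_sum_le ENNReal.summable fun s => ?_
    obtain ⟨N, hN⟩ := s.exists_nat_subset_range
    calc ∑ n ∈ s, ∫⁻ ω, ENNReal.ofReal ((Z (n + 1) ω - Z n ω) ^ 2) ∂μ
        ≤ ∑ n ∈ Finset.range N, ∫⁻ ω, ENNReal.ofReal ((Z (n + 1) ω - Z n ω) ^ 2) ∂μ :=
          Finset.sum_le_sum_of_subset hN
      _ = ∑ n ∈ Finset.range N, ENNReal.ofReal (∫ ω, (Z (n + 1) ω - Z n ω) ^ 2 ∂μ) := by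
          refine Finset.sum_congr rfl fun n _ => ?_
          rw [← ofReal_integral_eq_lintegral_ofReal (hdintsq n)
            (Eventually.of_forall fun ω => sq_nonneg _)]
      _ = ENNReal.ofReal (∑ n ∈ Finset.range N, ∫ ω, (Z (n + 1) ω - Z n ω) ^ 2 ∂μ) :=
          (ENNReal.ofReal_sum_of_nonneg fun n _ =>
            integral_nonneg fun ω => sq_nonneg _).symm
      _ ≤ ENNReal.ofReal ((∫ ω, Zlim ω ^ 2 ∂μ) - ∫ ω, Z 0 ω ^ 2 ∂μ) :=
          ENNReal.ofReal_le_ofReal (hpartial N)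
  · -- second inequality
    have h1 : (∫ ω, Zlim ω ^ 2 ∂μ) ≤ K ^ 2 := by
      calc (∫ ω, Zlim ω ^ 2 ∂μ) ≤ ∫ _, K ^ 2 ∂μ := by
            refine integral_mono_ae ?_ (integrable_const _) ?_
            · refine Integrable.mono' (integrable_const (K ^ 2))
                ((hZlimMeas.pow_const 2).aestronglyMeasurable) ?_
              filter_upwards [hlimbd] with ω ⟨h0, hK⟩
              rw [Real.norm_eq_abs, abs_of_nonneg (sq_nonneg _)]
              exact pow_le_pow_left₀ h0 hK 2
            · filter_upwards [hlimbd] with ω ⟨h0, hK⟩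
              exact pow_le_pow_left₀ h0 hK 2
        _ = K ^ 2 := by simp
    have h2 : 0 ≤ ∫ ω, Z 0 ω ^ 2 ∂μ := integral_nonneg fun ω => sq_nonneg _
    linarith
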